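/- Consider any broadcasted party-list election E = (N, C, k, l, A, L) with parties P_1, …, P_g whose popularities are strictly decreasing (n_1 > n_2 > … > n_g), in which every party has at least l candidates (|P_i| ≥ l for all i) and the parties jointly have at least k candidates (Σ_{i=1}^g |P_i| ≥ k). Then the CC-improvement of LV over AV equals IMP_CC(E) = (Σ_{i=1}^{min(⌈k/l⌉, g)} n_i) / (Σ_{j=1}^{s} n_j), where s is the least integer t with Σ_{i=1}^{t} |P_i| ≥ k. -/

import Mathlib

open Finset

/-- An election `E = (N, C, k, l, A, L)`: voters form the finite type `V`,
candidates the finite type `C`, `k` is the committee size, `l` the ballot limit,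
`A i` is the approval set of voter `i` and `L i` their ballot. -/
structure Election (V C : Type*) [Fintype V] [DecidableEq V] [Fintype C] [DecidableEq C] where
  k : ℕ
  l : ℕ
  A : V → Finset C
  L : V → Finset C
  k_le_card : k ≤ Fintype.card C
  one_le_l : 1 ≤ l
  l_le_k : l ≤ k
  ballot_card : ∀ i, (L i).card = l
  ballot_sub_approval : ∀ i, l ≤ (A i).card → L i ⊆ A i
  approval_ssub_ballot : ∀ i, (A i).card < l → A i ⊂ L i

variable {V C : Type*} [Fintype V] [DecidableEq V] [Fintype C] [DecidableEq C]

/-- The LV-score of a candidate: the number of voters whose ballot contains it. -/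
def sLVc (E : Election V C) (c : C) : ℕ := (univ.filter fun i => c ∈ E.L i).card

/-- The AV-score of a candidate: the number of voters approving it. -/
def sAVc (E : Election V C) (c : C) : ℕ := (univ.filter fun i => c ∈ E.A i).card

/-- The LV-score of a committee. -/
def sLV (E : Election V C) (W : Finset C) : ℕ := ∑ c ∈ W, sLVc E c

/-- The AV-score of a committee. -/
def sAV (E : Election V C) (W : Finset C) : ℕ := ∑ c ∈ W, sAVc E c

/-- The winning committees of Limited Voting: size-`k` committees maximizing the LV-score. -/
def LVwin (E : Election V C) : Set (Finset C) :=
  {W | W.card = E.k ∧ ∀ W' : Finset C, W'.card = E.k → sLV E W' ≤ sLV E W}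

/-- The winning committees of Approval Voting: size-`k` committees maximizing the AV-score. -/
def AVwin (E : Election V C) : Set (Finset C) :=
  {W | W.card = E.k ∧ ∀ W' : Finset C, W'.card = E.k → sAV E W' ≤ sAV E W}

/-- The Chamberlin–Courant score of a committee: the number of represented voters. -/
def sCC (E : Election V C) (W : Finset C) : ℕ :=
  (univ.filter fun i => (W ∩ E.A i).Nonempty).card

/-- `A` is a party-list profile: approval sets are nonempty and pairwise equal or disjoint. -/
def PartyList (E : Election V C) : Prop :=
  (∀ i, (E.A i).Nonempty) ∧ ∀ i j : V, E.A i = E.A j ∨ E.A i ∩ E.A j = ∅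

/-- `E` is consistent with some broadcasting (linear) order on candidates, encoded by an
injective priority function `f` (`f c < f c'` meaning `c ≻ c'`). -/
def Broadcasted (E : Election V C) : Prop :=
  ∃ f : C → ℕ, Function.Injective f ∧
    ∀ (i : V) (c c' : C), c ∈ E.A i → c' ∈ E.A i → c ∈ E.L i → c' ∉ E.L i → f c < f c'

/-- The number of voters of party `Pj`. -/
def nParty (E : Election V C) (Pj : Finset C) : ℕ := (univ.filter fun i => E.A i = Pj).card

section Aux
variable {C : Type*} [DecidableEq C]

lemma exchange_le (sc : C → ℕ) (k : ℕ) (W : Finset C) (hW : W.card = k)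
    (hmax : ∀ W' : Finset C, W'.card = k → ∑ c ∈ W', sc c ≤ ∑ c ∈ W, sc c)
    {c d : C} (hc : c ∈ W) (hd : d ∉ W) : sc d ≤ sc c := by
  by_contra h
  push_neg at h
  have hdW : d ∉ W.erase c := fun hm => hd (mem_of_mem_erase hm)
  have hk1 : 1 ≤ k := hW ▸ card_pos.mpr ⟨c, hc⟩
  have hcard : (insert d (W.erase c)).card = k := by
    rw [card_insert_of_notMem hdW, card_erase_of_mem hc, hW]
    omega
  have h1 := hmax _ hcard
  rw [sum_insert hdW] at h1
  have h2 : ∑ x ∈ W.erase c, sc x + sc c = ∑ x ∈ W, sc x := sum_erase_add W sc hc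
  omega

lemma card_filter_fin_lt (g t : ℕ) :
    (univ.filter fun j : Fin g => (j : ℕ) < t).card = min t g := by
  have h1 : ((univ.filter fun j : Fin g => (j : ℕ) < t).image Fin.val)
      = (range g).filter (fun x => x < t) := by
    ext x
    simp only [mem_image, mem_filter, mem_univ, true_and, mem_range]
    constructor
    · rintro ⟨j, hj, rfl⟩; exact ⟨j.isLt, hj⟩
    · rintro ⟨h1, h2⟩; exact ⟨⟨x, h1⟩, h2, rfl⟩
  have h2 : (range g).filter (fun x => x < t) = range (min t g) := by
    ext x; simp only [mem_filter, mem_range, lt_min_iff]; omega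
  rw [← card_image_of_injective _ Fin.val_injective, h1, h2, card_range]

lemma covered_lemma {g : ℕ} (Q : Fin g → Finset C) (n : Fin g → ℕ)
    (hdisj : ∀ j j' : Fin g, j ≠ j' → Q j ∩ Q j' = ∅)
    (hne : ∀ j, (Q j).Nonempty)
    (hanti : ∀ j j' : Fin g, j < j' → n j' < n j)
    (hpos : ∀ j, 1 ≤ n j)
    (sc : C → ℕ)
    (hsc : ∀ j, ∀ c ∈ Q j, sc c = n j)
    (hsc0 : ∀ c : C, (∀ j, c ∉ Q j) → sc c = 0)
    (k : ℕ) (hk : 1 ≤ k)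
    (s : ℕ)
    (hs : k ≤ ∑ j ∈ univ.filter (fun j : Fin g => (j : ℕ) < s), (Q j).card)
    (hsleast : ∀ t, k ≤ ∑ j ∈ univ.filter (fun j : Fin g => (j : ℕ) < t), (Q j).card → s ≤ t)
    (W : Finset C) (hW : W.card = k)
    (hmax : ∀ W' : Finset C, W'.card = k → ∑ c ∈ W', sc c ≤ ∑ c ∈ W, sc c) :
    (∀ c ∈ W, ∃ j : Fin g, (j : ℕ) < s ∧ c ∈ Q j) ∧
      ∀ j : Fin g, ((W ∩ Q j).Nonempty ↔ (j : ℕ) < s) := by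
  have hQdisj : ∀ x ∈ (univ : Finset (Fin g)), ∀ y ∈ (univ : Finset (Fin g)), x ≠ y →
      Disjoint (Q x) (Q y) := by
    intro x _ y _ h
    rw [disjoint_iff_inter_eq_empty]; exact hdisj x y h
  have step1 : ∀ c ∈ W, ∃ j : Fin g, (j : ℕ) < s ∧ c ∈ Q j := by
    intro c hc
    by_contra hcon
    push_neg at hcon
    set U : Finset C := (univ.filter fun j : Fin g => (j : ℕ) < s).biUnion Q with hU
    have hUcard : k ≤ U.card := by
      rw [hU, card_biUnion (fun x hx y hy hxy => hQdisj x (mem_univ x) y (mem_univ y) hxy)]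
      exact hs
    have hcU : c ∉ U := by
      simp only [hU, mem_biUnion, mem_filter, mem_univ, true_and, not_exists]
      rintro j ⟨hj, hcj⟩; exact hcon j hj hcj
    have hUW : (U \ W).Nonempty := by
      by_contra hcon2
      rw [not_nonempty_iff_eq_empty, sdiff_eq_empty_iff_subset] at hcon2
      have hsub : U ⊆ W.erase c :=
        fun x hx => mem_erase.mpr ⟨fun h => hcU (h ▸ hx), hcon2 hx⟩
      have := card_le_card hsub
      rw [card_erase_of_mem hc, hW] at this
      omega
    obtain ⟨d, hd⟩ := hUW
    rw [mem_sdiff] at hd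
    obtain ⟨j', hj'⟩ : ∃ j' : Fin g, (j' : ℕ) < s ∧ d ∈ Q j' := by
      have := hd.1
      simp only [hU, mem_biUnion, mem_filter, mem_univ, true_and] at this
      obtain ⟨j', h1, h2⟩ := this
      exact ⟨j', h1, h2⟩
    have hex := exchange_le sc k W hW hmax hc hd.2
    rw [hsc j' d hj'.2] at hex
    by_cases hcase : ∃ j, c ∈ Q j
    · obtain ⟨j, hcj⟩ := hcase
      rw [hsc j c hcj] at hex
      have hjs : ¬ (j : ℕ) < s := fun h => hcon j h hcj
      have hlt : j' < j := by rw [Fin.lt_def]; omega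
      exact absurd hex (not_le.mpr (hanti j' j hlt))
    · push_neg at hcase
      rw [hsc0 c hcase] at hex
      exact absurd hex (not_le.mpr (hpos j'))
  refine ⟨step1, fun j => ⟨?_, ?_⟩⟩
  · rintro ⟨c, hc⟩
    rw [mem_inter] at hc
    obtain ⟨j', hj', hcj'⟩ := step1 c hc.1
    have hjj : j = j' := by
      by_contra h
      have h2 := hdisj j j' h
      have : c ∈ Q j ∩ Q j' := mem_inter.mpr ⟨hc.2, hcj'⟩
      rw [h2] at this
      exact notMem_empty c this
    exact hjj ▸ hj'
  · intro hjs
    by_contra hempty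
    rw [not_nonempty_iff_eq_empty] at hempty
    have hsub : W ⊆ (univ.filter fun j'' : Fin g => (j'' : ℕ) < (j : ℕ)).biUnion Q := by
      intro c hc
      obtain ⟨d, hd⟩ := hne j
      have hdW : d ∉ W := by
        intro h
        have : d ∈ W ∩ Q j := mem_inter.mpr ⟨h, hd⟩
        rw [hempty] at this
        exact notMem_empty d this
      have hex := exchange_le sc k W hW hmax hc hdW
      rw [hsc j d hd] at hex
      obtain ⟨j'', hj''s, hcj''⟩ := step1 c hc
      rw [hsc j'' c hcj''] at hex
      simp only [mem_biUnion, mem_filter, mem_univ, true_and]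
      refine ⟨j'', ?_, hcj''⟩
      by_contra hge
      push_neg at hge
      rcases eq_or_lt_of_le hge with heq | hlt
      · have hj : j = j'' := Fin.ext heq
        subst hj
        have : c ∈ W ∩ Q j := mem_inter.mpr ⟨hc, hcj''⟩
        rw [hempty] at this
        exact notMem_empty c this
      · have hlt' : j < j'' := by rw [Fin.lt_def]; exact hlt
        exact absurd hex (not_le.mpr (hanti j j'' hlt'))
    have hle := card_le_card hsub
    rw [hW, card_biUnion (fun x hx y hy hxy => hQdisj x (mem_univ x) y (mem_univ y) hxy)] at hle
    have := hsleast (j : ℕ) hle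
    omega

end Aux

lemma sCC_partition (E : Election V C) {g : ℕ} (P : Fin g → Finset C)
    (hPall : ∀ i, ∃ j, E.A i = P j) (hPinj : Function.Injective P)
    (W : Finset C) :
    sCC E W = ∑ j ∈ univ.filter (fun j : Fin g => (W ∩ P j).Nonempty), nParty E (P j) := by
  unfold sCC nParty
  rw [← card_biUnion ?hdisj]
  · congr 1
    ext i
    simp only [mem_filter, mem_univ, true_and, mem_biUnion]
    constructor
    · intro hcov
      obtain ⟨j, hj⟩ := hPall i
      exact ⟨j, hj ▸ hcov, hj⟩
    · rintro ⟨j, hj1, hj2⟩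
      rw [hj2]
      exact hj1
  case hdisj =>
    intro x _ y _ hxy
    rw [Function.onFun, disjoint_left]
    intro i hi hi'
    rw [mem_filter] at hi hi'
    exact hxy (hPinj (hi.2.symm.trans hi'.2))

/-- In a broadcasted party-list election with strictly decreasing party
popularities, where every party has at least `l` candidates and the parties jointly
have at least `k` candidates, the CC-improvement of LV over AV equals
`(Σ_{i=1}^{min(⌈k/l⌉, g)} n_i) / (Σ_{j=1}^{s} n_j)`, where `s` is the least `t` with
`Σ_{i=1}^{t} |P_i| ≥ k`. -/
theorem stmt2 (E : Election V C) (hPL : PartyList E) (hB : Broadcasted E)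
    (g : ℕ) (P : Fin g → Finset C)
    (hPall : ∀ i : V, ∃ j, E.A i = P j)
    (hPrep : ∀ j, ∃ i : V, E.A i = P j)
    (hanti : ∀ j j' : Fin g, j < j' → nParty E (P j') < nParty E (P j))
    (hPl : ∀ j, E.l ≤ (P j).card)
    (hPk : E.k ≤ ∑ j : Fin g, (P j).card)
    (s : ℕ)
    (hs : E.k ≤ ∑ j ∈ univ.filter (fun j : Fin g => (j : ℕ) < s), (P j).card)
    (hsleast : ∀ t : ℕ,
      E.k ≤ ∑ j ∈ univ.filter (fun j : Fin g => (j : ℕ) < t), (P j).card → s ≤ t) :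
    ((sInf (sCC E '' LVwin E) : ℕ) : ℚ) / ((sSup (sCC E '' AVwin E) : ℕ) : ℚ) =
      (∑ j ∈ univ.filter (fun j : Fin g => (j : ℕ) < min ((E.k + E.l - 1) / E.l) g),
          (nParty E (P j) : ℚ)) /
        (∑ j ∈ univ.filter (fun j : Fin g => (j : ℕ) < s), (nParty E (P j) : ℚ)) := by
  classical
  have hl0 : 0 < E.l := E.one_le_l
  have hk1 : 1 ≤ E.k := le_trans E.one_le_l E.l_le_k
  set q : ℕ := (E.k + E.l - 1) / E.l with hqdef
  have hq_iff : ∀ t : ℕ, q ≤ t ↔ E.k ≤ E.l * t := by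
    intro t
    rw [hqdef, Nat.div_le_iff_le_mul_add_pred hl0]
    have h1 := E.one_le_l
    have h2 := hk1
    generalize E.l * t = x
    omega
  have hkq : E.k ≤ E.l * q := (hq_iff q).mp le_rfl
  have hg1 : 1 ≤ g := by
    rcases Nat.eq_zero_or_pos g with rfl | h
    · simp only [univ_eq_empty, sum_empty] at hPk
      omega
    · exact h
  have hPinj : Function.Injective P := by
    intro j j' h
    by_contra hne'
    rcases lt_or_gt_of_ne hne' with hlt | hlt
    · exact absurd (hanti j j' hlt) (by rw [h]; exact lt_irrefl _)
    · exact absurd (hanti j' j hlt) (by rw [h]; exact lt_irrefl _)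
  have hPdisj : ∀ j j' : Fin g, j ≠ j' → P j ∩ P j' = ∅ := by
    intro j j' hne'
    obtain ⟨i, hi⟩ := hPrep j
    obtain ⟨i', hi'⟩ := hPrep j'
    rcases hPL.2 i i' with heq | hdis
    · rw [hi, hi'] at heq
      exact absurd (hPinj heq) hne'
    · rw [← hi, ← hi']
      exact hdis
  have hnpos : ∀ j : Fin g, 1 ≤ nParty E (P j) := by
    intro j
    obtain ⟨i, hi⟩ := hPrep j
    exact card_pos.mpr ⟨i, mem_filter.mpr ⟨mem_univ i, hi⟩⟩
  have hPne : ∀ j : Fin g, (P j).Nonempty := by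
    intro j
    obtain ⟨i, hi⟩ := hPrep j
    exact hi ▸ hPL.1 i
  have hAVsc : ∀ j : Fin g, ∀ c ∈ P j, sAVc E c = nParty E (P j) := by
    intro j c hc
    unfold sAVc nParty
    congr 1
    ext i
    simp only [mem_filter, mem_univ, true_and]
    constructor
    · intro hci
      obtain ⟨j', hj'⟩ := hPall i
      have hcj' : c ∈ P j' := hj' ▸ hci
      have hjj : j' = j := by
        by_contra h
        have hd := hPdisj j' j h
        have : c ∈ P j' ∩ P j := mem_inter.mpr ⟨hcj', hc⟩
        rw [hd] at this
        exact notMem_empty c this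
      rw [hj', hjj]
    · intro h
      rw [h]
      exact hc
  have hAVsc0 : ∀ c : C, (∀ j, c ∉ P j) → sAVc E c = 0 := by
    intro c hc
    unfold sAVc
    rw [card_eq_zero, filter_eq_empty_iff]
    intro i _
    intro hci
    obtain ⟨j, hj⟩ := hPall i
    exact hc j (hj ▸ hci)
  have exWin : ∀ sc : C → ℕ, ∃ W : Finset C, W.card = E.k ∧
      ∀ W' : Finset C, W'.card = E.k → ∑ c ∈ W', sc c ≤ ∑ c ∈ W, sc c := by
    intro sc
    have hcard : E.k ≤ (univ : Finset C).card := by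
      rw [card_univ]; exact E.k_le_card
    obtain ⟨W0, _, hW0⟩ := Finset.exists_subset_card_eq hcard
    have hne : (univ.filter fun W : Finset C => W.card = E.k).Nonempty :=
      ⟨W0, mem_filter.mpr ⟨mem_univ _, hW0⟩⟩
    obtain ⟨W, hWmem, hWmax⟩ := exists_max_image _ (fun W => ∑ c ∈ W, sc c) hne
    rw [mem_filter] at hWmem
    exact ⟨W, hWmem.2, fun W' hW' => hWmax W' (mem_filter.mpr ⟨mem_univ _, hW'⟩)⟩
  -- AV analysis
  have hAVcc : ∀ W ∈ AVwin E, sCC E W =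
      ∑ j ∈ univ.filter (fun j : Fin g => (j : ℕ) < s), nParty E (P j) := by
    intro W hW
    obtain ⟨hWcard, hWmax⟩ := hW
    have hcov := (covered_lemma P (fun j => nParty E (P j)) hPdisj hPne hanti hnpos
      (sAVc E) hAVsc hAVsc0 E.k hk1 s hs hsleast W hWcard hWmax).2
    rw [sCC_partition E P hPall hPinj W]
    congr 1
    exact filter_congr (fun j _ => hcov j)
  -- LV analysis
  obtain ⟨f, hfinj, hford⟩ := hB
  have hlA : ∀ i : V, E.l ≤ (E.A i).card := by
    intro i
    obtain ⟨j, hj⟩ := hPall i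
    rw [hj]
    exact hPl j
  have hballot_eq : ∀ i i' : V, E.A i = E.A i' → E.L i = E.L i' := by
    intro i i' hA
    have hsubi : E.L i ⊆ E.A i := E.ballot_sub_approval i (hlA i)
    have hsubi' : E.L i' ⊆ E.A i' := E.ballot_sub_approval i' (hlA i')
    by_contra hne'
    have h1 : (E.L i \ E.L i').Nonempty := by
      rw [sdiff_nonempty]
      intro hsub
      exact hne' (eq_of_subset_of_card_le hsub
        (by rw [E.ballot_card, E.ballot_card]))
    have h2 : (E.L i' \ E.L i).Nonempty := by
      rw [sdiff_nonempty]
      intro hsub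
      exact hne' (eq_of_subset_of_card_le hsub
        (by rw [E.ballot_card, E.ballot_card])).symm
    obtain ⟨c, hc⟩ := h1
    obtain ⟨c', hc'⟩ := h2
    rw [mem_sdiff] at hc hc'
    have o1 := hford i c c' (hsubi hc.1) (by rw [hA]; exact hsubi' hc'.1) hc.1 hc'.2
    have o2 := hford i' c' c (hsubi' hc'.1) (by rw [← hA]; exact hsubi hc.1) hc'.1 hc.2
    omega
  have hTex : ∀ j : Fin g, ∃ B : Finset C, B ⊆ P j ∧ B.card = E.l ∧
      ∀ i : V, E.A i = P j → E.L i = B := by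
    intro j
    obtain ⟨i0, hi0⟩ := hPrep j
    refine ⟨E.L i0, ?_, E.ballot_card i0, ?_⟩
    · have := E.ballot_sub_approval i0 (hlA i0)
      rwa [hi0] at this
    · intro i hi
      exact hballot_eq i i0 (hi.trans hi0.symm)
  choose T hTsub hTcard hTspec using hTex
  have hTdisj : ∀ j j' : Fin g, j ≠ j' → T j ∩ T j' = ∅ := by
    intro j j' h
    have hd := hPdisj j j' h
    have hsub : T j ∩ T j' ⊆ P j ∩ P j' := inter_subset_inter (hTsub j) (hTsub j')
    rw [hd] at hsub
    exact subset_empty.mp hsub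
  have hTne : ∀ j : Fin g, (T j).Nonempty := by
    intro j
    apply card_pos.mp
    rw [hTcard j]
    exact hl0
  have hLVsc : ∀ j : Fin g, ∀ c ∈ T j, sLVc E c = nParty E (P j) := by
    intro j c hc
    unfold sLVc nParty
    congr 1
    ext i
    simp only [mem_filter, mem_univ, true_and]
    constructor
    · intro hci
      obtain ⟨j', hj'⟩ := hPall i
      have hci' : c ∈ T j' := hTspec j' i hj' ▸ hci
      have hjj : j' = j := by
        by_contra h
        have hd := hTdisj j' j h
        have : c ∈ T j' ∩ T j := mem_inter.mpr ⟨hci', hc⟩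
        rw [hd] at this
        exact notMem_empty c this
      rw [hj', hjj]
    · intro h
      rw [hTspec j i h]
      exact hc
  have hLVsc0 : ∀ c : C, (∀ j, c ∉ T j) → sLVc E c = 0 := by
    intro c hc
    unfold sLVc
    rw [card_eq_zero, filter_eq_empty_iff]
    intro i _
    intro hci
    obtain ⟨j, hj⟩ := hPall i
    exact hc j (hTspec j i hj ▸ hci)
  have hLVcc : ∀ W ∈ LVwin E, sCC E W =
      ∑ j ∈ univ.filter (fun j : Fin g => (j : ℕ) < min q g), nParty E (P j) := by
    intro W hW
    obtain ⟨hWcard, hWmax⟩ := hW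
    by_cases hcase : E.k ≤ g * E.l
    · have hqg : q ≤ g := (hq_iff g).mpr (by rw [mul_comm]; exact hcase)
      have hminq : min q g = q := min_eq_left hqg
      have hsumT : ∀ t : ℕ, ∑ j ∈ univ.filter (fun j : Fin g => (j : ℕ) < t), (T j).card
          = min t g * E.l := by
        intro t
        rw [sum_congr rfl (fun j _ => hTcard j), sum_const, smul_eq_mul, card_filter_fin_lt]
      have hsT : E.k ≤ ∑ j ∈ univ.filter (fun j : Fin g => (j : ℕ) < q), (T j).card := by
        rw [hsumT, min_eq_left hqg, mul_comm]
        exact hkq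
      have hsleastT : ∀ t, E.k ≤ ∑ j ∈ univ.filter (fun j : Fin g => (j : ℕ) < t),
          (T j).card → q ≤ t := by
        intro t ht
        rw [hsumT] at ht
        rcases le_total t g with h | h
        · rw [min_eq_left h, mul_comm] at ht
          exact (hq_iff t).mpr ht
        · exact le_trans hqg h
      have hcov := covered_lemma T (fun j => nParty E (P j)) hTdisj hTne hanti hnpos
        (sLVc E) hLVsc hLVsc0 E.k hk1 q hsT hsleastT W hWcard hWmax
      have hcovP : ∀ j : Fin g, ((W ∩ P j).Nonempty ↔ (j : ℕ) < q) := by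
        intro j
        constructor
        · rintro ⟨c, hc⟩
          rw [mem_inter] at hc
          obtain ⟨j', hj', hcj'⟩ := hcov.1 c hc.1
          have hcPj' : c ∈ P j' := hTsub j' hcj'
          have hjj : j' = j := by
            by_contra h
            have hd := hPdisj j' j h
            have : c ∈ P j' ∩ P j := mem_inter.mpr ⟨hcPj', hc.2⟩
            rw [hd] at this
            exact notMem_empty c this
          exact hjj ▸ hj'
        · intro hj
          obtain ⟨c, hc⟩ := (hcov.2 j).mpr hj
          rw [mem_inter] at hc
          exact ⟨c, mem_inter.mpr ⟨hc.1, hTsub j hc.2⟩⟩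
      rw [sCC_partition E P hPall hPinj W, hminq]
      congr 1
      exact filter_congr (fun j _ => hcovP j)
    · push_neg at hcase
      have hgq : g ≤ q := by
        by_contra h
        push_neg at h
        have h2 : E.l * q ≤ E.l * g := Nat.mul_le_mul_left _ (le_of_lt h)
        have h3 : E.k ≤ g * E.l := le_trans hkq (by rw [mul_comm g E.l]; exact h2)
        exact absurd h3 (not_le.mpr hcase)
      have hminq : min q g = g := min_eq_right hgq
      have hcovall : ∀ j : Fin g, (W ∩ T j).Nonempty := by
        intro j
        by_contra hempty
        rw [not_nonempty_iff_eq_empty] at hempty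
        have hsub : W ⊆ univ.biUnion T := by
          intro c hc
          obtain ⟨d, hd⟩ := hTne j
          have hdW : d ∉ W := by
            intro h
            have : d ∈ W ∩ T j := mem_inter.mpr ⟨h, hd⟩
            rw [hempty] at this
            exact notMem_empty d this
          have hex := exchange_le (sLVc E) E.k W hWcard hWmax hc hdW
          rw [hLVsc j d hd] at hex
          by_cases h2 : ∃ j', c ∈ T j'
          · obtain ⟨j', hj'⟩ := h2
            exact mem_biUnion.mpr ⟨j', mem_univ j', hj'⟩
          · push_neg at h2
            rw [hLVsc0 c h2] at hex
            exact absurd hex (not_le.mpr (hnpos j))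
        have hle := card_le_card hsub
        have hdisjT : ∀ x ∈ (univ : Finset (Fin g)), ∀ y ∈ (univ : Finset (Fin g)),
            x ≠ y → Disjoint (T x) (T y) := by
          intro x _ y _ h
          rw [disjoint_iff_inter_eq_empty]
          exact hTdisj x y h
        rw [hWcard, card_biUnion hdisjT] at hle
        have hsum : ∑ j : Fin g, (T j).card = g * E.l := by
          rw [sum_congr rfl (fun j _ => hTcard j), sum_const, card_univ,
            Fintype.card_fin, smul_eq_mul]
        rw [hsum] at hle
        exact absurd hle (not_le.mpr hcase)
      have hcovP : ∀ j : Fin g, (W ∩ P j).Nonempty := by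
        intro j
        obtain ⟨c, hc⟩ := hcovall j
        rw [mem_inter] at hc
        exact ⟨c, mem_inter.mpr ⟨hc.1, hTsub j hc.2⟩⟩
      rw [sCC_partition E P hPall hPinj W, hminq]
      congr 1
      apply filter_congr
      intro j _
      exact iff_of_true (hcovP j) j.isLt
  -- winners exist
  obtain ⟨WL, hWLcard, hWLmax⟩ := exWin (sLVc E)
  have hWLmem : WL ∈ LVwin E := ⟨hWLcard, hWLmax⟩
  obtain ⟨WA, hWAcard, hWAmax⟩ := exWin (sAVc E)
  have hWAmem : WA ∈ AVwin E := ⟨hWAcard, hWAmax⟩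
  have hImgLV : sCC E '' LVwin E =
      {∑ j ∈ univ.filter (fun j : Fin g => (j : ℕ) < min q g), nParty E (P j)} := by
    apply Set.eq_singleton_iff_unique_mem.mpr
    constructor
    · exact ⟨WL, hWLmem, hLVcc WL hWLmem⟩
    · rintro x ⟨W, hW, rfl⟩
      exact hLVcc W hW
  have hImgAV : sCC E '' AVwin E =
      {∑ j ∈ univ.filter (fun j : Fin g => (j : ℕ) < s), nParty E (P j)} := by
    apply Set.eq_singleton_iff_unique_mem.mpr
    constructor
    · exact ⟨WA, hWAmem, hAVcc WA hWAmem⟩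
    · rintro x ⟨W, hW, rfl⟩
      exact hAVcc W hW
  rw [hImgLV, hImgAV, csInf_singleton, csSup_singleton]
  push_cast
  rfl
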